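/- Let G be a misère Partizan Kayles position, let x be the number of strips of G whose length is congruent to 1 modulo 3, and y the number of strips whose length is congruent to 2 modulo 3. Then o⁻(G) = N if x = y or (x < y and x + 2y ≡ 0 mod 3); o⁻(G) = R if x > y or (x < y and x + 2y ≡ 1 mod 3); and o⁻(G) = P if x < y and x + 2y ≡ 2 mod 3. -/
import Mathlib


/-- Add a strip of length `k` to a position (strips of length 0 are discarded). -/
def addStrip (m : Multiset ℕ) (k : ℕ) : Multiset ℕ := if k = 0 then m else k ::ₘ m

/-- Left removes one square from a strip of length `n ≥ 1`, leaving strips `i` and `n-1-i`. -/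
def LeftMove (G G' : Multiset ℕ) : Prop :=
  ∃ n ∈ G, ∃ i, i + 1 ≤ n ∧ G' = addStrip (addStrip (G.erase n) i) (n - 1 - i)

/-- Right removes two adjacent squares from a strip of length `n ≥ 2`, leaving `i` and `n-2-i`. -/
def RightMove (G G' : Multiset ℕ) : Prop :=
  ∃ n ∈ G, ∃ i, i + 2 ≤ n ∧ G' = addStrip (addStrip (G.erase n) i) (n - 2 - i)

mutual
  /-- Misère play: Left, to move, wins (a player unable to move wins). -/
  inductive LeftWinsMover : Multiset ℕ → Prop
    | cannot (G : Multiset ℕ) : (¬ ∃ G', LeftMove G G') → LeftWinsMover G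
    | move (G G' : Multiset ℕ) : LeftMove G G' → LeftWinsWaiter G' → LeftWinsMover G
  /-- Misère play: Left wins with Right to move. -/
  inductive LeftWinsWaiter : Multiset ℕ → Prop
    | intro (G : Multiset ℕ) : (∃ G', RightMove G G') →
        (∀ G', RightMove G G' → LeftWinsMover G') → LeftWinsWaiter G
end

inductive Outcome | L | N | P | R
  deriving DecidableEq

open Classical in
/-- The misère outcome `o⁻(G)`. -/
noncomputable def outcome (G : Multiset ℕ) : Outcome :=
  if LeftWinsMover G then (if LeftWinsWaiter G then Outcome.L else Outcome.N)
  else (if LeftWinsWaiter G then Outcome.P else Outcome.R)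

/-- The partial order on outcomes: `L` greatest, `R` least, `N` and `P` incomparable. -/
def Outcome.le (a b : Outcome) : Prop := a = b ∨ a = Outcome.R ∨ b = Outcome.L

/-- `pos k j` is the position `kS₁ + jS₂`. -/
def pos (k j : ℕ) : Multiset ℕ := Multiset.replicate k 1 + Multiset.replicate j 2

def w (k : ℕ) : ℤ := if k % 3 = 1 then -1 else if k % 3 = 2 then 1 else 0

def dd (G : Multiset ℕ) : ℤ :=
  ((G.filter (fun m => m % 3 = 2)).card : ℤ) - ((G.filter (fun m => m % 3 = 1)).card : ℤ)

lemma dd_cons (n : ℕ) (G : Multiset ℕ) : dd (n ::ₘ G) = dd G + w n := by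
  simp only [dd, w, Multiset.filter_cons]
  by_cases h1 : n % 3 = 1 <;> by_cases h2 : n % 3 = 2 <;>
    simp [h1, h2] <;> push_cast <;> omega

lemma dd_addStrip (m : Multiset ℕ) (k : ℕ) : dd (addStrip m k) = dd m + w k := by
  unfold addStrip
  split_ifs with h
  · subst h; simp [w]
  · exact dd_cons k m

lemma sum_addStrip (m : Multiset ℕ) (k : ℕ) : (addStrip m k).sum = m.sum + k := by
  unfold addStrip; split_ifs with h <;> simp [h, Multiset.sum_cons]; omega

lemma mem_addStrip_zero (m : Multiset ℕ) (k : ℕ) (h : 0 ∉ m) : 0 ∉ addStrip m k := by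
  unfold addStrip; split_ifs with hk
  · exact h
  · intro hc
    rcases Multiset.mem_cons.1 hc with h1 | h1
    · exact hk h1.symm
    · exact h h1

lemma dd_erase {G : Multiset ℕ} {n : ℕ} (hn : n ∈ G) : dd (G.erase n) = dd G - w n := by
  conv_rhs => rw [← Multiset.cons_erase hn, dd_cons]; ring

lemma sum_erase' {G : Multiset ℕ} {n : ℕ} (hn : n ∈ G) : (G.erase n).sum + n = G.sum := by
  conv_rhs => rw [← Multiset.cons_erase hn, Multiset.sum_cons]
  omega

lemma dd_pieces {G : Multiset ℕ} {n : ℕ} (hn : n ∈ G) (i j : ℕ) :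
    dd (addStrip (addStrip (G.erase n) i) j) = dd G - w n + w i + w j := by
  rw [dd_addStrip, dd_addStrip, dd_erase hn]

lemma sum_pieces {G : Multiset ℕ} {n : ℕ} (hn : n ∈ G) (i j : ℕ) :
    (addStrip (addStrip (G.erase n) i) j).sum + n = G.sum + i + j := by
  rw [sum_addStrip, sum_addStrip]
  have := sum_erase' hn
  omega

lemma zero_pieces {G : Multiset ℕ} (h0 : 0 ∉ G) (n i j : ℕ) :
    0 ∉ addStrip (addStrip (G.erase n) i) j := by
  apply mem_addStrip_zero; apply mem_addStrip_zero
  intro hc; exact h0 (Multiset.mem_of_mem_erase hc)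

lemma w_res {n : ℕ} : (n % 3 = 0 → w n = 0) ∧ (n % 3 = 1 → w n = -1) ∧ (n % 3 = 2 → w n = 1) := by
  unfold w; split_ifs <;> omega

-- invariants of arbitrary moves
lemma leftMove_facts {G G' : Multiset ℕ} (h0 : 0 ∉ G) (h : LeftMove G G') :
    (dd G' = dd G + 1 ∨ dd G' = dd G - 2) ∧ G'.sum + 1 = G.sum ∧ 0 ∉ G' := by
  obtain ⟨n, hn, i, hi, rfl⟩ := h
  refine ⟨?_, ?_, zero_pieces h0 n i (n - 1 - i)⟩
  · rw [dd_pieces hn]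
    have hij : i + (n - 1 - i) + 1 = n := by omega
    have : w i + w (n - 1 - i) = w n + 1 ∨ w i + w (n - 1 - i) = w n - 2 := by
      unfold w; split_ifs <;> omega
    omega
  · have := sum_pieces hn i (n - 1 - i); omega

lemma rightMove_facts {G G' : Multiset ℕ} (h0 : 0 ∉ G) (h : RightMove G G') :
    (dd G' = dd G - 1 ∨ dd G' = dd G + 2) ∧ G'.sum + 2 = G.sum ∧ 0 ∉ G' := by
  obtain ⟨n, hn, i, hi, rfl⟩ := h
  refine ⟨?_, ?_, zero_pieces h0 n i (n - 2 - i)⟩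
  · rw [dd_pieces hn]
    have hij : i + (n - 2 - i) + 2 = n := by omega
    have : w i + w (n - 2 - i) = w n - 1 ∨ w i + w (n - 2 - i) = w n + 2 := by
      unfold w; split_ifs <;> omega
    omega
  · have := sum_pieces hn i (n - 2 - i); omega

lemma mkLeft {G : Multiset ℕ} {n : ℕ} (hn : n ∈ G) {i : ℕ} (hi : i + 1 ≤ n) :
    LeftMove G (addStrip (addStrip (G.erase n) i) (n - 1 - i)) := ⟨n, hn, i, hi, rfl⟩

lemma mkRight {G : Multiset ℕ} {n : ℕ} (hn : n ∈ G) {i : ℕ} (hi : i + 2 ≤ n) :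
    RightMove G (addStrip (addStrip (G.erase n) i) (n - 2 - i)) := ⟨n, hn, i, hi, rfl⟩

lemma main_ind : ∀ T : ℕ, ∀ G : Multiset ℕ, G.sum = T → 0 ∉ G →
    ((LeftWinsMover G ↔ 0 ≤ dd G ∧ dd G % 3 = 0) ∧
     (LeftWinsWaiter G ↔ 1 ≤ dd G ∧ dd G % 3 = 1)) := by
  intro T
  induction T using Nat.strong_induction_on with
  | _ T ih =>
  intro G hT h0
  have IHm : ∀ G', LeftMove G G' → (LeftWinsWaiter G' ↔ 1 ≤ dd G' ∧ dd G' % 3 = 1) := by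
    intro G' h
    obtain ⟨_, hs, hz⟩ := leftMove_facts h0 h
    exact (ih G'.sum (by omega) G' rfl hz).2
  have IHr : ∀ G', RightMove G G' → (LeftWinsMover G' ↔ 0 ≤ dd G' ∧ dd G' % 3 = 0) := by
    intro G' h
    obtain ⟨_, hs, hz⟩ := rightMove_facts h0 h
    exact (ih G'.sum (by omega) G' rfl hz).1
  constructor
  · -- mover
    constructor
    · intro h
      cases h with
      | cannot G hno =>
        have hG0 : G = 0 := by
          by_contra hne
          obtain ⟨n, hn⟩ := Multiset.exists_mem_of_ne_zero hne
          have hn1 : 1 ≤ n := by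
            rcases Nat.eq_zero_or_pos n with h | h
            · exact absurd (h ▸ hn) h0
            · exact h
          exact hno ⟨_, mkLeft hn (i := 0) (by omega)⟩
        subst hG0
        simp [dd]
      | move G G' hm hw =>
        have hdd := (leftMove_facts h0 hm).1
        have hW := (IHm G' hm).1 hw
        omega
    · rintro ⟨h1, h2⟩
      by_cases hG0 : G = 0
      · exact LeftWinsMover.cannot G (by rintro ⟨G', n, hn, _⟩; simp [hG0] at hn)
      · -- construct a move to a W position
        by_cases hx : ∃ n ∈ G, n % 3 = 1
        · obtain ⟨n, hn, hc⟩ := hx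
          have hn1 : 1 ≤ n := by omega
          refine LeftWinsMover.move G _ (mkLeft hn (i := 0) (by omega)) ?_
          rw [IHm _ (mkLeft hn (i := 0) (by omega))]
          rw [dd_pieces hn]
          have e1 : w n = -1 := by unfold w; split_ifs <;> omega
          have e2 : w 0 = 0 := by simp [w]
          have e3 : w (n - 1 - 0) = 0 := by unfold w; split_ifs <;> omega
          rw [e1, e2, e3]; omega
        · by_cases hy : ∃ n ∈ G, n % 3 = 2
          · obtain ⟨n, hn, hc⟩ := hy
            have hn2 : 2 ≤ n := by omega
            -- dd G ≥ 1: x-count 0, y-count ≥ 1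
            have hxc : (G.filter (fun m => m % 3 = 1)).card = 0 := by
              rw [Multiset.card_eq_zero, Multiset.filter_eq_nil]
              intro a ha hc1; exact hx ⟨a, ha, hc1⟩
            have hyc : 0 < (G.filter (fun m => m % 3 = 2)).card := by
              rw [Multiset.card_pos_iff_exists_mem]
              exact ⟨n, Multiset.mem_filter.2 ⟨hn, hc⟩⟩
            have hdd1 : 1 ≤ dd G := by
              unfold dd; rw [hxc]; push_cast; omega
            refine LeftWinsMover.move G _ (mkLeft hn (i := 1) (by omega)) ?_
            rw [IHm _ (mkLeft hn (i := 1) (by omega))]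
            rw [dd_pieces hn]
            have e1 : w n = 1 := by unfold w; split_ifs <;> omega
            have e2 : w 1 = -1 := by simp [w]
            have e3 : w (n - 1 - 1) = 0 := by unfold w; split_ifs <;> omega
            rw [e1, e2, e3]; omega
          · obtain ⟨n, hn⟩ := Multiset.exists_mem_of_ne_zero hG0
            have hc : n % 3 = 0 := by
              have c1 : ¬ n % 3 = 1 := fun hc => hx ⟨n, hn, hc⟩
              have c2 : ¬ n % 3 = 2 := fun hc => hy ⟨n, hn, hc⟩
              omega
            have hn3 : 3 ≤ n := by
              have : n ≠ 0 := fun h => h0 (h ▸ hn)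
              omega
            refine LeftWinsMover.move G _ (mkLeft hn (i := 0) (by omega)) ?_
            rw [IHm _ (mkLeft hn (i := 0) (by omega))]
            rw [dd_pieces hn]
            have e1 : w n = 0 := by unfold w; split_ifs <;> omega
            have e2 : w 0 = 0 := by simp [w]
            have e3 : w (n - 1 - 0) = 1 := by unfold w; split_ifs <;> omega
            rw [e1, e2, e3]; omega
  · -- waiter
    constructor
    · intro h
      cases h with
      | intro G hex hall =>
        obtain ⟨G'', n, hn, i, hi, _⟩ := hex
        -- construct a right move with dd = dd G - 1
        have key : ∃ G₀, RightMove G G₀ ∧ dd G₀ = dd G - 1 := by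
          rcases (show n % 3 = 0 ∨ n % 3 = 1 ∨ n % 3 = 2 by omega) with hc | hc | hc
          · refine ⟨_, mkRight hn (i := 0) (by omega), ?_⟩
            rw [dd_pieces hn]
            have e1 : w n = 0 := by unfold w; split_ifs <;> omega
            have e2 : w 0 = 0 := by simp [w]
            have e3 : w (n - 2 - 0) = -1 := by unfold w; split_ifs <;> omega
            rw [e1, e2, e3]; ring
          · have hn4 : 4 ≤ n := by omega
            refine ⟨_, mkRight hn (i := 1) (by omega), ?_⟩
            rw [dd_pieces hn]
            have e1 : w n = -1 := by unfold w; split_ifs <;> omega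
            have e2 : w 1 = -1 := by simp [w]
            have e3 : w (n - 2 - 1) = -1 := by unfold w; split_ifs <;> omega
            rw [e1, e2, e3]; ring
          · refine ⟨_, mkRight hn (i := 0) (by omega), ?_⟩
            rw [dd_pieces hn]
            have e1 : w n = 1 := by unfold w; split_ifs <;> omega
            have e2 : w 0 = 0 := by simp [w]
            have e3 : w (n - 2 - 0) = 0 := by unfold w; split_ifs <;> omega
            rw [e1, e2, e3]; ring
        obtain ⟨G₀, hm0, hd0⟩ := key
        have hM := (IHr G₀ hm0).1 (hall G₀ hm0)
        omega
    · rintro ⟨h1, h2⟩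
      -- dd G ≥ 1 → exists strip ≡ 2 mod 3
      have hy : ∃ n ∈ G, n % 3 = 2 := by
        by_contra hc
        have hyc : (G.filter (fun m => m % 3 = 2)).card = 0 := by
          rw [Multiset.card_eq_zero, Multiset.filter_eq_nil]
          intro a ha hc1; exact hc ⟨a, ha, hc1⟩
        have : dd G ≤ 0 := by unfold dd; rw [hyc]; push_cast; omega
        omega
      obtain ⟨n, hn, hc⟩ := hy
      have hn2 : 2 ≤ n := by omega
      refine LeftWinsWaiter.intro G ⟨_, mkRight hn (i := 0) (by omega)⟩ ?_
      intro G' hm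
      rw [IHr G' hm]
      have hdd := (rightMove_facts h0 hm).1
      omega

theorem kayles_general_outcome (G : Multiset ℕ) (hG : 0 ∉ G)
    (x y : ℕ) (hx : x = (G.filter (fun m => m % 3 = 1)).card)
    (hy : y = (G.filter (fun m => m % 3 = 2)).card) :
    ((x = y ∨ (x < y ∧ (x + 2 * y) % 3 = 0)) → outcome G = Outcome.N) ∧
    ((x > y ∨ (x < y ∧ (x + 2 * y) % 3 = 1)) → outcome G = Outcome.R) ∧
    ((x < y ∧ (x + 2 * y) % 3 = 2) → outcome G = Outcome.P) := by
  obtain ⟨hM, hW⟩ := main_ind G.sum G rfl hG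
  have hdd : dd G = (y : ℤ) - (x : ℤ) := by
    unfold dd; rw [← hx, ← hy]
  rw [hdd] at hM hW
  refine ⟨?_, ?_, ?_⟩
  · intro h
    have m : LeftWinsMover G := hM.mpr (by constructor <;> omega)
    have nw : ¬ LeftWinsWaiter G := fun hw => by have := hW.mp hw; omega
    unfold outcome
    rw [if_pos m, if_neg nw]
  · intro h
    have nm : ¬ LeftWinsMover G := fun hm => by have := hM.mp hm; omega
    have nw : ¬ LeftWinsWaiter G := fun hw => by have := hW.mp hw; omega
    unfold outcome
    rw [if_neg nm, if_neg nw]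
  · intro h
    have nm : ¬ LeftWinsMover G := fun hm => by have := hM.mp hm; omega
    have w : LeftWinsWaiter G := hW.mpr (by constructor <;> omega)
    unfold outcome
    rw [if_neg nm, if_pos w]
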